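/- arXiv:0803.1266 — 2 statements merged into one kernel-verified Lean document; each statement's English description precedes it below -/
import Mathlib

section
/- Let μ be a finite measure and γ a translation bounded measure on ℝ^d (both possibly signed). For f, g continuous with compact support, define f_μ(x) := ∫ f(x+z) dμ(z). Then (μ * μ̃ * γ)(f * g̃) = γ(f_μ * (g_μ)~), where g̃(x) = conj(g(−x)) and μ̃ is the measure with μ̃(h) = conj(μ(h̃)). -/
open MeasureTheory Filter Topology
open scoped NNReal ENNReal


/-- Convolution of two measures on `ℝ^d`. -/
noncomputable def mconv {d : ℕ} (μ ν : Measure (EuclideanSpace ℝ (Fin d))) :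
    Measure (EuclideanSpace ℝ (Fin d)) :=
  (μ.prod ν).map (fun p => p.1 + p.2)

/-- The function convolution `(f * g̃)(x) = ∫ f(t) conj(g(t-x)) dt`. -/
noncomputable def fconvTilde {d : ℕ} (f g : EuclideanSpace ℝ (Fin d) → ℂ)
    (x : EuclideanSpace ℝ (Fin d)) : ℂ :=
  ∫ t, f t * (starRingEnd ℂ) (g (t - x)) ∂volume

/-- `f_μ(x) = ∫ f(x+z) dμ(z)` for the signed measure `μ = μp - μn`. -/
noncomputable def smear {d : ℕ} (μp μn : Measure (EuclideanSpace ℝ (Fin d)))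
    (f : EuclideanSpace ℝ (Fin d) → ℂ) (x : EuclideanSpace ℝ (Fin d)) : ℂ :=
  (∫ z, f (x + z) ∂μp) - ∫ z, f (x + z) ∂μn

section Aux
variable {d : ℕ}

local notation "E" => EuclideanSpace ℝ (Fin d)

/-- Translation boundedness of a measure. -/
def TBdd (γ : Measure (EuclideanSpace ℝ (Fin d))) : Prop :=
  ∀ K : Set (EuclideanSpace ℝ (Fin d)), IsCompact K → ∃ C : ℝ≥0,
    ∀ t, γ ((fun x => t + x) '' K) ≤ C

lemma TBdd.finiteOnCompacts {γ : Measure E} (h : TBdd γ) : IsFiniteMeasureOnCompacts γ := by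
  constructor
  intro K hK
  obtain ⟨C, hC⟩ := h K hK
  have h0 := hC 0
  rw [show (fun x => (0:E) + x) '' K = K by
    rw [show (fun x => (0:E) + x) = id from funext fun x => by simp, Set.image_id]] at h0
  exact h0.trans_lt ENNReal.coe_lt_top

lemma lintegral_nnnorm_le_of_support {γ : Measure E} {S : Set (EuclideanSpace ℝ (Fin d))}
    (hS : MeasurableSet S) {h : EuclideanSpace ℝ (Fin d) → ℂ} {M : ℝ≥0}
    (hb : ∀ x, ‖h x‖₊ ≤ M) (h0 : ∀ x, x ∉ S → h x = 0) :
    ∫⁻ x, (‖h x‖₊ : ℝ≥0∞) ∂γ ≤ M * γ S := by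
  have hle : ∀ x, (‖h x‖₊ : ℝ≥0∞) ≤ S.indicator (fun _ => (M : ℝ≥0∞)) x := by
    intro x
    by_cases hx : x ∈ S
    · simpa [Set.indicator_of_mem hx] using ENNReal.coe_le_coe.2 (hb x)
    · simp [Set.indicator_of_notMem hx, h0 x hx]
  calc ∫⁻ x, (‖h x‖₊ : ℝ≥0∞) ∂γ ≤ ∫⁻ x, S.indicator (fun _ => (M : ℝ≥0∞)) x ∂γ :=
        lintegral_mono hle
    _ = M * γ S := by rw [lintegral_indicator hS, setLIntegral_const]

lemma gamma_translate_bound {γ : Measure E} (hγ : TBdd γ) {K : Set (EuclideanSpace ℝ (Fin d))}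
    (hK : IsCompact K) : ∃ C : ℝ≥0, ∀ a, γ ((fun x => a + x) ⁻¹' K) ≤ C := by
  obtain ⟨C, hC⟩ := hγ K hK
  refine ⟨C, fun a => ?_⟩
  have hset : (fun x => a + x) ⁻¹' K = (fun x => (-a) + x) '' K := by
    ext x
    constructor
    · intro hx; exact ⟨a + x, hx, by simp⟩
    · rintro ⟨k, hk, rfl⟩
      simpa [Set.mem_preimage, add_neg_cancel_left] using hk
  rw [hset]; exact hC (-a)

lemma cont_cs_nnnorm_bound {f : EuclideanSpace ℝ (Fin d) → ℂ} (hfc : Continuous f)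
    (hfs : HasCompactSupport f) : ∃ M : ℝ≥0, ∀ x, ‖f x‖₊ ≤ M := by
  obtain ⟨C, hC⟩ := hfs.exists_bound_of_continuous hfc
  refine ⟨C.toNNReal, fun x => ?_⟩
  rw [← norm_toNNReal]
  exact Real.toNNReal_le_toNNReal (hC x)

lemma gamma_lint_bound {γ : Measure E} (hγ : TBdd γ) {F : EuclideanSpace ℝ (Fin d) → ℂ}
    (hFc : Continuous F) (hFs : HasCompactSupport F) :
    ∃ D : ℝ≥0, ∀ a, ∫⁻ x, (‖F (a + x)‖₊ : ℝ≥0∞) ∂γ ≤ D := by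
  obtain ⟨C, hC⟩ := gamma_translate_bound hγ hFs
  obtain ⟨M, hM⟩ := cont_cs_nnnorm_bound hFc hFs
  refine ⟨M * C, fun a => ?_⟩
  have hS : MeasurableSet ((fun x => a + x) ⁻¹' tsupport F) :=
    (isClosed_tsupport F).measurableSet.preimage (measurable_const_add a)
  have := lintegral_nnnorm_le_of_support (γ := γ) hS
    (h := fun x => F (a + x)) (M := M) (fun x => hM _)
    (fun x hx => image_eq_zero_of_notMem_tsupport hx)
  refine this.trans ?_
  rw [ENNReal.coe_mul]
  exact mul_le_mul_right (hC a) _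

end Aux

section Fubini
variable {d : ℕ}

local notation "E" => EuclideanSpace ℝ (Fin d)

lemma lint_shift (μ : Measure (EuclideanSpace ℝ (Fin d))) [SFinite μ]
    {h : EuclideanSpace ℝ (Fin d) → ℂ} (hc : Continuous h) :
    ∫⁻ t, ∫⁻ z, (‖h (t + z)‖₊ : ℝ≥0∞) ∂μ ∂(volume : Measure E)
      = μ Set.univ * ∫⁻ t, (‖h t‖₊ : ℝ≥0∞) ∂(volume : Measure E) := by
  have hm : AEMeasurable (Function.uncurry fun (t z : E) => (‖h (t + z)‖₊ : ℝ≥0∞))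
      ((volume : Measure E).prod μ) :=
    (((hc.comp continuous_add).measurable.nnnorm).coe_nnreal_ennreal).aemeasurable
  rw [lintegral_lintegral_swap hm]
  have : ∀ z : E, ∫⁻ t, (‖h (t + z)‖₊ : ℝ≥0∞) ∂(volume : Measure E)
      = ∫⁻ t, (‖h t‖₊ : ℝ≥0∞) ∂(volume : Measure E) := fun z =>
    lintegral_add_right_eq_self (fun t => (‖h t‖₊ : ℝ≥0∞)) z
  rw [lintegral_congr this, lintegral_const, mul_comm]

lemma integral_mconv (ν γ : Measure (EuclideanSpace ℝ (Fin d))) [IsFiniteMeasure ν] [SFinite γ]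
    (hγ : TBdd γ) {F : EuclideanSpace ℝ (Fin d) → ℂ}
    (hFc : Continuous F) (hFs : HasCompactSupport F) :
    Integrable F (mconv ν γ) ∧
      ∫ x, F x ∂(mconv ν γ) = ∫ a, ∫ x, F (a + x) ∂γ ∂ν := by
  have hadd : Measurable fun p : E × E => p.1 + p.2 := measurable_add
  obtain ⟨D, hD⟩ := gamma_lint_bound hγ hFc hFs
  have hsm : AEStronglyMeasurable (fun p : E × E => F (p.1 + p.2)) (ν.prod γ) :=
    (hFc.comp continuous_add).aestronglyMeasurable
  have hint : Integrable (fun p : E × E => F (p.1 + p.2)) (ν.prod γ) := by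
    refine ⟨hsm, ?_⟩
    show (∫⁻ p : E × E, (‖F (p.1 + p.2)‖₊ : ℝ≥0∞) ∂(ν.prod γ)) < ⊤
    calc ∫⁻ p : E × E, (‖F (p.1 + p.2)‖₊ : ℝ≥0∞) ∂(ν.prod γ)
        = ∫⁻ a, ∫⁻ x, (‖F (a + x)‖₊ : ℝ≥0∞) ∂γ ∂ν := lintegral_prod _ hsm.enorm
      _ ≤ ∫⁻ _, (D : ℝ≥0∞) ∂ν := lintegral_mono fun a => hD a
      _ = D * ν Set.univ := lintegral_const _
      _ < ⊤ := ENNReal.mul_lt_top ENNReal.coe_lt_top (measure_lt_top _ _)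
  constructor
  · rw [mconv]
    exact (integrable_map_measure hFc.aestronglyMeasurable hadd.aemeasurable).mpr hint
  · rw [mconv, integral_map hadd.aemeasurable hFc.aestronglyMeasurable, integral_prod _ hint]

lemma integral_mconv_neg (μ μ' : Measure (EuclideanSpace ℝ (Fin d)))
    [IsFiniteMeasure μ] [IsFiniteMeasure μ']
    {H : EuclideanSpace ℝ (Fin d) → ℂ} (hsm : StronglyMeasurable H)
    (M : ℝ) (hb : ∀ a, ‖H a‖ ≤ M) :
    ∫ a, H a ∂(mconv μ (μ'.map Neg.neg)) = ∫ z, ∫ w, H (z - w) ∂μ' ∂μ := by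
  have hneg : Measurable (Neg.neg : E → E) := measurable_neg
  have hadd : Measurable fun p : E × E => p.1 + p.2 := measurable_add
  have hint : Integrable (fun p : E × E => H (p.1 + p.2)) (μ.prod (μ'.map Neg.neg)) :=
    (integrable_const M).mono' ((hsm.comp_measurable hadd).aestronglyMeasurable)
      (ae_of_all _ fun p => hb _)
  rw [mconv, integral_map hadd.aemeasurable hsm.aestronglyMeasurable, integral_prod _ hint]
  refine integral_congr_ae (ae_of_all _ fun z => ?_)
  have hsm2 : AEStronglyMeasurable (fun w' => H (z + w')) (μ'.map (Neg.neg : E → E)) :=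
    (hsm.comp_measurable (measurable_const_add z)).aestronglyMeasurable
  show ∫ w', H (z + w') ∂(μ'.map (Neg.neg : E → E)) = ∫ w, H (z - w) ∂μ'
  rw [integral_map hneg.aemeasurable hsm2]
  simp only [← sub_eq_add_neg]

lemma integrable_smear_part (μ : Measure (EuclideanSpace ℝ (Fin d))) [IsFiniteMeasure μ]
    {f : EuclideanSpace ℝ (Fin d) → ℂ} (hfc : Continuous f) (hfs : HasCompactSupport f) :
    Integrable (fun t => ∫ z, f (t + z) ∂μ) (volume : Measure E) := by
  refine ⟨(StronglyMeasurable.integral_prod_right'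
    ((hfc.comp continuous_add).stronglyMeasurable)).aestronglyMeasurable, ?_⟩
  show (∫⁻ t, (‖∫ z, f (t + z) ∂μ‖₊ : ℝ≥0∞) ∂(volume : Measure E)) < ⊤
  calc ∫⁻ t, (‖∫ z, f (t + z) ∂μ‖₊ : ℝ≥0∞) ∂(volume : Measure E)
      ≤ ∫⁻ t, ∫⁻ z, (‖f (t + z)‖₊ : ℝ≥0∞) ∂μ ∂(volume : Measure E) :=
        lintegral_mono fun t => enorm_integral_le_lintegral_enorm _
    _ = μ Set.univ * ∫⁻ t, (‖f t‖₊ : ℝ≥0∞) ∂(volume : Measure E) := lint_shift μ hfc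
    _ < ⊤ := ENNReal.mul_lt_top (measure_lt_top _ _)
        (hfc.integrable_of_hasCompactSupport hfs).2

lemma smear_part_bound (μ' : Measure (EuclideanSpace ℝ (Fin d))) [IsFiniteMeasure μ']
    {g : EuclideanSpace ℝ (Fin d) → ℂ} {Mg : ℝ≥0} (hMg : ∀ x, ‖g x‖₊ ≤ Mg) (u : E) :
    ‖∫ w, g (u + w) ∂μ'‖ ≤ (Mg : ℝ) * (μ' Set.univ).toReal :=
  norm_integral_le_of_norm_le_const (ae_of_all _ fun w => by
    simpa using NNReal.coe_le_coe.2 (hMg (u + w)))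

end Fubini

section Key
variable {d : ℕ}

local notation "E" => EuclideanSpace ℝ (Fin d)

lemma key_lemma (μ μ' γ : Measure (EuclideanSpace ℝ (Fin d)))
    [IsFiniteMeasure μ] [IsFiniteMeasure μ'] [SFinite γ] (hγ : TBdd γ)
    (f g : EuclideanSpace ℝ (Fin d) → ℂ)
    (hfc : Continuous f) (hfs : HasCompactSupport f)
    (hgc : Continuous g) (hgs : HasCompactSupport g) :
    Integrable (fconvTilde f g) (mconv (mconv μ (μ'.map Neg.neg)) γ) ∧
    Integrable (fun x => fconvTilde (fun t => ∫ z, f (t + z) ∂μ)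
        (fun u => ∫ w, g (u + w) ∂μ') x) γ ∧
    ∫ x, fconvTilde f g x ∂(mconv (mconv μ (μ'.map Neg.neg)) γ)
      = ∫ x, fconvTilde (fun t => ∫ z, f (t + z) ∂μ)
          (fun u => ∫ w, g (u + w) ∂μ') x ∂γ := by
  obtain ⟨Mg, hMg⟩ := cont_cs_nnnorm_bound hgc hgs
  have intf : Integrable f (volume : Measure E) := hfc.integrable_of_hasCompactSupport hfs
  have hMgR : ∀ x : E, ‖g x‖ ≤ (Mg : ℝ) := fun x => by
    rw [← coe_nnnorm]; exact NNReal.coe_le_coe.2 (hMg x)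
  -- the function h = conj ∘ g ∘ neg
  have hhc : Continuous fun u : E => (starRingEnd ℂ) (g (-u)) :=
    Complex.continuous_conj.comp (hgc.comp continuous_neg)
  have hhs : HasCompactSupport fun u : E => (starRingEnd ℂ) (g (-u)) :=
    (hgs.comp_homeomorph (Homeomorph.neg (EuclideanSpace ℝ (Fin d)))).comp_left (map_zero _)
  have hFeq : fconvTilde f g
      = convolution f (fun u : E => (starRingEnd ℂ) (g (-u))) (ContinuousLinearMap.mul ℂ ℂ) volume := by
    funext x
    rw [convolution_def]
    show ∫ t, f t * (starRingEnd ℂ) (g (t - x)) ∂volume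
        = ∫ t, (ContinuousLinearMap.mul ℂ ℂ) (f t) ((starRingEnd ℂ) (g (-(x - t)))) ∂volume
    simp only [neg_sub, ContinuousLinearMap.mul_apply']
  have hFc : Continuous (fconvTilde f g) := by
    rw [hFeq]
    exact HasCompactSupport.continuous_convolution_right _ hhs hfc.locallyIntegrable hhc
  have hFs : HasCompactSupport (fconvTilde f g) := by
    rw [hFeq]
    exact HasCompactSupport.convolution _ hfs hhs
  haveI : IsFiniteMeasure (mconv μ (μ'.map Neg.neg)) := by unfold mconv; infer_instance
  obtain ⟨hFint, heq1⟩ := integral_mconv (mconv μ (μ'.map Neg.neg)) γ hγ hFc hFs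
  -- the function H a = ∫ x, F (a + x) dγ
  have hHsm : StronglyMeasurable fun a : E => ∫ x, fconvTilde f g (a + x) ∂γ :=
    StronglyMeasurable.integral_prod_right' ((hFc.comp continuous_add).stronglyMeasurable)
  obtain ⟨D, hD⟩ := gamma_lint_bound hγ hFc hFs
  have hHb : ∀ a : E, ‖∫ x, fconvTilde f g (a + x) ∂γ‖ ≤ (D : ℝ) := by
    intro a
    have h1 : (‖∫ x, fconvTilde f g (a + x) ∂γ‖₊ : ℝ≥0∞) ≤ D :=
      (enorm_integral_le_lintegral_enorm _).trans (hD a)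
    calc ‖∫ x, fconvTilde f g (a + x) ∂γ‖
        = ((‖∫ x, fconvTilde f g (a + x) ∂γ‖₊ : ℝ≥0) : ℝ) := (coe_nnnorm _).symm
      _ ≤ (D : ℝ) := NNReal.coe_le_coe.2 (ENNReal.coe_le_coe.1 h1)
  have heq2 := integral_mconv_neg μ μ' hHsm (D : ℝ) hHb
  have harg : ∀ t z w x : E, t + z - (z - w + x) = t + w - x := fun t z w x => by abel
  have ptF : ∀ z w x : E, fconvTilde f g (z - w + x)
      = ∫ t, f (t + z) * (starRingEnd ℂ) (g (t + w - x)) ∂(volume : Measure E) := by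
    intro z w x
    have h2 : (∫ t, f (t + z) * (starRingEnd ℂ) (g (t + z - (z - w + x))) ∂(volume : Measure E))
        = ∫ t, f t * (starRingEnd ℂ) (g (t - (z - w + x))) ∂(volume : Measure E) :=
      integral_add_right_eq_self (fun s => f s * (starRingEnd ℂ) (g (s - (z - w + x)))) z
    rw [show fconvTilde f g (z - w + x)
        = ∫ t, f t * (starRingEnd ℂ) (g (t - (z - w + x))) ∂(volume : Measure E) from rfl, ← h2]
    simp only [harg]
  have hLHS : ∫ x, fconvTilde f g x ∂(mconv (mconv μ (μ'.map Neg.neg)) γ)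
      = ∫ z, ∫ w, ∫ x, ∫ t, f (t + z) * (starRingEnd ℂ) (g (t + w - x))
          ∂(volume : Measure E) ∂γ ∂μ' ∂μ := by
    calc ∫ x, fconvTilde f g x ∂(mconv (mconv μ (μ'.map Neg.neg)) γ)
        = ∫ a, ∫ x, fconvTilde f g (a + x) ∂γ ∂(mconv μ (μ'.map Neg.neg)) := heq1
      _ = ∫ z, ∫ w, ∫ x, fconvTilde f g (z - w + x) ∂γ ∂μ' ∂μ := heq2
      _ = _ := by
          refine integral_congr_ae (ae_of_all _ fun z => ?_)
          refine integral_congr_ae (ae_of_all _ fun w => ?_)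
          refine integral_congr_ae (ae_of_all _ fun x => ?_)
          exact ptF z w x
  -- RHS side
  have ptR1 : ∀ x : E, fconvTilde (fun t => ∫ z, f (t + z) ∂μ) (fun u => ∫ w, g (u + w) ∂μ') x
      = ∫ t, ∫ p : E × E, f (t + p.1) * (starRingEnd ℂ) (g (t - x + p.2))
          ∂(μ.prod μ') ∂(volume : Measure E) := by
    intro x
    show ∫ t, (∫ z, f (t + z) ∂μ) * (starRingEnd ℂ) (∫ w, g (t - x + w) ∂μ')
        ∂(volume : Measure E) = _
    refine integral_congr_ae (ae_of_all _ fun t => ?_)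
    show (∫ z, f (t + z) ∂μ) * (starRingEnd ℂ) (∫ w, g (t - x + w) ∂μ')
        = ∫ p : E × E, f (t + p.1) * (starRingEnd ℂ) (g (t - x + p.2)) ∂(μ.prod μ')
    rw [← integral_conj, ← integral_prod_mul]
  have intΦ : ∀ x : E, Integrable (Function.uncurry fun (t : E) (p : E × E) =>
      f (t + p.1) * (starRingEnd ℂ) (g (t - x + p.2)))
      ((volume : Measure E).prod (μ.prod μ')) := by
    intro x
    have hc : Continuous fun q : E × (E × E) =>
        f (q.1 + q.2.1) * (starRingEnd ℂ) (g (q.1 - x + q.2.2)) :=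
      (hfc.comp (continuous_fst.add (continuous_fst.comp continuous_snd))).mul
        (Complex.continuous_conj.comp (hgc.comp
          ((continuous_fst.sub continuous_const).add (continuous_snd.comp continuous_snd))))
    refine ⟨hc.aestronglyMeasurable, ?_⟩
    have hMeas : Measurable fun q : E × (E × E) => (‖f (q.1 + q.2.1)‖₊ : ℝ≥0∞) :=
      ((hfc.comp (continuous_fst.add (continuous_fst.comp continuous_snd))).measurable.nnnorm).coe_nnreal_ennreal
    have hMeas2 : ∀ t : E, Measurable fun p : E × E => (‖f (t + p.1)‖₊ : ℝ≥0∞) :=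
      fun t => ((hfc.comp (continuous_const.add continuous_fst)).measurable.nnnorm).coe_nnreal_ennreal
    have hinner : ∀ t : E, (∫⁻ p : E × E, (‖f (t + p.1)‖₊ : ℝ≥0∞) ∂(μ.prod μ'))
        = (∫⁻ z, (‖f (t + z)‖₊ : ℝ≥0∞) ∂μ) * μ' Set.univ := by
      intro t
      rw [lintegral_prod _ (hMeas2 t).aemeasurable]
      simp only [lintegral_const]
      exact lintegral_mul_const' _ _ (measure_ne_top μ' _)
    show (∫⁻ q : E × (E × E), (‖f (q.1 + q.2.1) * (starRingEnd ℂ) (g (q.1 - x + q.2.2))‖₊ : ℝ≥0∞)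
        ∂((volume : Measure E).prod (μ.prod μ'))) < ⊤
    calc ∫⁻ q : E × (E × E), (‖f (q.1 + q.2.1) * (starRingEnd ℂ) (g (q.1 - x + q.2.2))‖₊ : ℝ≥0∞)
          ∂((volume : Measure E).prod (μ.prod μ'))
        ≤ ∫⁻ q : E × (E × E), (Mg : ℝ≥0∞) * (‖f (q.1 + q.2.1)‖₊ : ℝ≥0∞)
          ∂((volume : Measure E).prod (μ.prod μ')) := by
          refine lintegral_mono fun q => ?_
          rw [nnnorm_mul, ENNReal.coe_mul, mul_comm]
          exact mul_le_mul_left (by rw [RCLike.nnnorm_conj]; exact ENNReal.coe_le_coe.2 (hMg _)) _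
      _ = Mg * ∫⁻ q : E × (E × E), (‖f (q.1 + q.2.1)‖₊ : ℝ≥0∞)
          ∂((volume : Measure E).prod (μ.prod μ')) := lintegral_const_mul _ hMeas
      _ = Mg * ∫⁻ t, ∫⁻ p : E × E, (‖f (t + p.1)‖₊ : ℝ≥0∞) ∂(μ.prod μ') ∂(volume : Measure E) := by
          rw [lintegral_prod _ hMeas.aemeasurable]
      _ = Mg * ((μ Set.univ * ∫⁻ t, (‖f t‖₊ : ℝ≥0∞) ∂(volume : Measure E)) * μ' Set.univ) := by
          rw [lintegral_congr hinner, lintegral_mul_const' _ _ (measure_ne_top μ' _),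
            lint_shift μ hfc]
      _ < ⊤ := ENNReal.mul_lt_top ENNReal.coe_lt_top
          (ENNReal.mul_lt_top (ENNReal.mul_lt_top (measure_lt_top _ _) intf.2) (measure_lt_top _ _))
  have ptR2 : ∀ x : E, fconvTilde (fun t => ∫ z, f (t + z) ∂μ) (fun u => ∫ w, g (u + w) ∂μ') x
      = ∫ p : E × E, ∫ t, f (t + p.1) * (starRingEnd ℂ) (g (t - x + p.2))
          ∂(volume : Measure E) ∂(μ.prod μ') :=
    fun x => (ptR1 x).trans (integral_integral_swap (intΦ x))
  -- Θ facts
  have trans_int : ∀ z : E, Integrable (fun t : E => f (t + z)) volume := by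
    intro z
    exact (hfc.comp (continuous_add_right z)).integrable_of_hasCompactSupport
      (hfs.comp_homeomorph (Homeomorph.addRight z))
  have intΦt : ∀ x z w : E, Integrable
      (fun t => f (t + z) * (starRingEnd ℂ) (g (t - x + w))) (volume : Measure E) := by
    intro x z w
    have h2 := (trans_int z).bdd_mul
      ((Complex.continuous_conj.comp (hgc.comp
        (((continuous_id.sub continuous_const).add continuous_const)))).aestronglyMeasurable)
      (ae_of_all _ fun t => by
        show ‖(starRingEnd ℂ) (g (t - x + w))‖ ≤ (Mg : ℝ)
        rw [RCLike.norm_conj]; exact hMgR _)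
    simpa [mul_comm] using h2
  have Θb : ∀ (x : E) (p : E × E),
      ‖∫ t, f (t + p.1) * (starRingEnd ℂ) (g (t - x + p.2)) ∂(volume : Measure E)‖
        ≤ (Mg : ℝ) * ∫ t, ‖f t‖ ∂(volume : Measure E) := by
    intro x p
    calc ‖∫ t, f (t + p.1) * (starRingEnd ℂ) (g (t - x + p.2)) ∂(volume : Measure E)‖
        ≤ ∫ t, ‖f (t + p.1) * (starRingEnd ℂ) (g (t - x + p.2))‖ ∂(volume : Measure E) :=
          norm_integral_le_integral_norm _
      _ ≤ ∫ t, (Mg : ℝ) * ‖f (t + p.1)‖ ∂(volume : Measure E) := by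
          refine integral_mono (intΦt x p.1 p.2).norm ((trans_int p.1).norm.const_mul _) fun t => ?_
          show ‖f (t + p.1) * (starRingEnd ℂ) (g (t - x + p.2))‖ ≤ (Mg : ℝ) * ‖f (t + p.1)‖
          rw [norm_mul, RCLike.norm_conj, mul_comm]
          exact mul_le_mul_of_nonneg_right (hMgR _) (norm_nonneg _)
      _ = (Mg : ℝ) * ∫ t, ‖f (t + p.1)‖ ∂(volume : Measure E) := integral_const_mul _ _
      _ = (Mg : ℝ) * ∫ t, ‖f t‖ ∂(volume : Measure E) := by
          rw [integral_add_right_eq_self (fun t : E => ‖f t‖) p.1]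
  have Θbnn : ∀ (x : E) (p : E × E),
      ‖∫ t, f (t + p.1) * (starRingEnd ℂ) (g (t - x + p.2)) ∂(volume : Measure E)‖₊
        ≤ ((Mg : ℝ) * ∫ t, ‖f t‖ ∂(volume : Measure E)).toNNReal := fun x p => by
    rw [← norm_toNNReal]
    exact Real.toNNReal_le_toNNReal (Θb x p)
  have hK₀ : IsCompact ((fun q : E × E => q.1 - q.2) '' (tsupport f ×ˢ tsupport g)) :=
    (hfs.prod hgs).image (continuous_fst.sub continuous_snd)
  obtain ⟨Cθ, hCθ⟩ := hγ _ hK₀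
  have Θvanish : ∀ (x : E) (p : E × E),
      x ∉ (fun y => (p.2 - p.1) + y) '' ((fun q : E × E => q.1 - q.2) '' (tsupport f ×ˢ tsupport g)) →
      (∫ t, f (t + p.1) * (starRingEnd ℂ) (g (t - x + p.2)) ∂(volume : Measure E)) = 0 := by
    intro x p hx
    have hzero : ∀ t : E, f (t + p.1) * (starRingEnd ℂ) (g (t - x + p.2)) = 0 := by
      intro t
      by_cases hf0 : f (t + p.1) = 0
      · rw [hf0, zero_mul]
      by_cases hg0 : g (t - x + p.2) = 0
      · rw [hg0, map_zero, mul_zero]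
      exfalso
      refine hx ⟨(t + p.1) - (t - x + p.2), ⟨(t + p.1, t - x + p.2),
        ⟨subset_tsupport f hf0, subset_tsupport g hg0⟩, rfl⟩, ?_⟩
      show (p.2 - p.1) + ((t + p.1) - (t - x + p.2)) = x
      abel
    calc (∫ t, f (t + p.1) * (starRingEnd ℂ) (g (t - x + p.2)) ∂(volume : Measure E))
        = ∫ _, (0 : ℂ) ∂(volume : Measure E) := integral_congr_ae (ae_of_all _ hzero)
      _ = 0 := integral_zero _ _
  haveI : OpensMeasurableSpace ((E × (E × E)) × E) := Prod.opensMeasurableSpace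
  have Θsm : StronglyMeasurable fun q : E × (E × E) =>
      ∫ t, f (t + q.2.1) * (starRingEnd ℂ) (g (t - q.1 + q.2.2)) ∂(volume : Measure E) :=
    StronglyMeasurable.integral_prod_right' (Continuous.stronglyMeasurable
      ((hfc.comp (continuous_snd.add
          (continuous_fst.comp (continuous_snd.comp continuous_fst)))).mul
        (Complex.continuous_conj.comp (hgc.comp
          ((continuous_snd.sub (continuous_fst.comp continuous_fst)).add
            (continuous_snd.comp (continuous_snd.comp continuous_fst)))))))
  have ΘInt : Integrable (Function.uncurry fun (x : E) (p : E × E) =>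
      ∫ t, f (t + p.1) * (starRingEnd ℂ) (g (t - x + p.2)) ∂(volume : Measure E))
      (γ.prod (μ.prod μ')) := by
    refine ⟨Θsm.aestronglyMeasurable, ?_⟩
    show (∫⁻ q : E × (E × E),
        (‖∫ t, f (t + q.2.1) * (starRingEnd ℂ) (g (t - q.1 + q.2.2)) ∂(volume : Measure E)‖₊ : ℝ≥0∞)
        ∂(γ.prod (μ.prod μ'))) < ⊤
    erw [lintegral_prod_symm _ Θsm.aestronglyMeasurable.enorm]
    have hb : ∀ p : E × E, (∫⁻ x, (‖∫ t, f (t + p.1) * (starRingEnd ℂ) (g (t - x + p.2))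
        ∂(volume : Measure E)‖₊ : ℝ≥0∞) ∂γ)
        ≤ ((((Mg : ℝ) * ∫ t, ‖f t‖ ∂(volume : Measure E)).toNNReal * Cθ : ℝ≥0) : ℝ≥0∞) := by
      intro p
      have hSm : MeasurableSet ((fun y => (p.2 - p.1) + y) ''
          ((fun q : E × E => q.1 - q.2) '' (tsupport f ×ˢ tsupport g))) :=
        ((hK₀.image (continuous_add_left _)).isClosed).measurableSet
      refine (lintegral_nnnorm_le_of_support hSm (fun x => Θbnn x p)
        (fun x hx => Θvanish x p hx)).trans ?_
      rw [ENNReal.coe_mul]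
      exact mul_le_mul_right (hCθ _) _
    calc (∫⁻ p : E × E, ∫⁻ x, (‖∫ t, f (t + p.1) * (starRingEnd ℂ) (g (t - x + p.2))
          ∂(volume : Measure E)‖₊ : ℝ≥0∞) ∂γ ∂(μ.prod μ'))
        ≤ ∫⁻ _, ((((Mg : ℝ) * ∫ t, ‖f t‖ ∂(volume : Measure E)).toNNReal * Cθ : ℝ≥0) : ℝ≥0∞)
          ∂(μ.prod μ') := lintegral_mono hb
      _ = _ * (μ.prod μ') Set.univ := lintegral_const _
      _ < ⊤ := ENNReal.mul_lt_top ENNReal.coe_lt_top (measure_lt_top _ _)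
  have hRint : Integrable (fun x => fconvTilde (fun t => ∫ z, f (t + z) ∂μ)
      (fun u => ∫ w, g (u + w) ∂μ') x) γ :=
    ΘInt.integral_prod_left.congr (ae_of_all _ fun x => (ptR2 x).symm)
  have hρint : Integrable (fun p : E × E => ∫ x, ∫ t,
      f (t + p.1) * (starRingEnd ℂ) (g (t - x + p.2)) ∂(volume : Measure E) ∂γ) (μ.prod μ') :=
    ΘInt.integral_prod_right
  have hRHS : ∫ x, fconvTilde (fun t => ∫ z, f (t + z) ∂μ) (fun u => ∫ w, g (u + w) ∂μ') x ∂γ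
      = ∫ z, ∫ w, ∫ x, ∫ t, f (t + z) * (starRingEnd ℂ) (g (t - x + w))
          ∂(volume : Measure E) ∂γ ∂μ' ∂μ := by
    calc ∫ x, fconvTilde (fun t => ∫ z, f (t + z) ∂μ) (fun u => ∫ w, g (u + w) ∂μ') x ∂γ
        = ∫ x, ∫ p : E × E, ∫ t, f (t + p.1) * (starRingEnd ℂ) (g (t - x + p.2))
            ∂(volume : Measure E) ∂(μ.prod μ') ∂γ := integral_congr_ae (ae_of_all _ ptR2)
      _ = ∫ p : E × E, ∫ x, ∫ t, f (t + p.1) * (starRingEnd ℂ) (g (t - x + p.2))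
            ∂(volume : Measure E) ∂γ ∂(μ.prod μ') := integral_integral_swap ΘInt
      _ = _ := integral_prod _ hρint
  refine ⟨hFint, hRint, ?_⟩
  rw [hLHS, hRHS]
  simp only [sub_add_eq_add_sub]

end Key

section Main
variable {d : ℕ}

local notation "E" => EuclideanSpace ℝ (Fin d)

lemma mconv_add_left (A B γ' : Measure (EuclideanSpace ℝ (Fin d)))
    [SFinite A] [SFinite B] [SFinite γ'] :
    mconv (A + B) γ' = mconv A γ' + mconv B γ' := by
  rw [mconv, mconv, mconv, Measure.add_prod, Measure.map_add _ _ measurable_add]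

lemma intAB (μ ν : Measure (EuclideanSpace ℝ (Fin d))) [IsFiniteMeasure μ] [IsFiniteMeasure ν]
    {f g : EuclideanSpace ℝ (Fin d) → ℂ}
    (hfc : Continuous f) (hfs : HasCompactSupport f)
    (hgc : Continuous g) (hgs : HasCompactSupport g) (x : E) :
    Integrable (fun t => (∫ z, f (t + z) ∂μ) * (starRingEnd ℂ) (∫ w, g ((t - x) + w) ∂ν))
      (volume : Measure E) := by
  have hA := integrable_smear_part μ hfc hfs
  obtain ⟨Mg, hMg⟩ := cont_cs_nnnorm_bound hgc hgs
  have hBsm : StronglyMeasurable fun u : E => ∫ w, g (u + w) ∂ν :=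
    StronglyMeasurable.integral_prod_right' ((hgc.comp continuous_add).stronglyMeasurable)
  have hsm : AEStronglyMeasurable (fun t : E => (starRingEnd ℂ) (∫ w, g ((t - x) + w) ∂ν))
      (volume : Measure E) :=
    (Complex.continuous_conj.comp_stronglyMeasurable
      (hBsm.comp_measurable (measurable_id.sub measurable_const))).aestronglyMeasurable
  have hb : ∀ t : E, ‖(starRingEnd ℂ) (∫ w, g ((t - x) + w) ∂ν)‖ ≤ (Mg : ℝ) * (ν Set.univ).toReal :=
    fun t => by rw [RCLike.norm_conj]; exact smear_part_bound ν hMg _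
  have h2 := hA.bdd_mul hsm (ae_of_all _ hb)
  simpa [mul_comm] using h2

end Main

theorem signed_convolution_trick
    (d : ℕ) (μp μn γp γn : Measure (EuclideanSpace ℝ (Fin d)))
    [IsFiniteMeasure μp] [IsFiniteMeasure μn]
    (hγp : ∀ K : Set (EuclideanSpace ℝ (Fin d)), IsCompact K → ∃ C : ℝ≥0,
      ∀ t, γp ((fun x => t + x) '' K) ≤ C)
    (hγn : ∀ K : Set (EuclideanSpace ℝ (Fin d)), IsCompact K → ∃ C : ℝ≥0,
      ∀ t, γn ((fun x => t + x) '' K) ≤ C)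
    (f g : EuclideanSpace ℝ (Fin d) → ℂ)
    (hfc : Continuous f) (hfs : HasCompactSupport f)
    (hgc : Continuous g) (hgs : HasCompactSupport g) :
    -- `μ = μp - μn`, `μ̃ = (μp.map Neg.neg) - (μn.map Neg.neg)`,
    -- `γ = γp - γn`; the identity `(μ * μ̃ * γ)(f * g̃) = γ(f_μ * (g_μ)~)`
    -- written out in terms of the positive and negative parts:
    ((∫ x, fconvTilde f g x
        ∂(mconv (mconv μp (μp.map Neg.neg) + mconv μn (μn.map Neg.neg)) γp
          + mconv (mconv μp (μn.map Neg.neg) + mconv μn (μp.map Neg.neg)) γn))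
      - ∫ x, fconvTilde f g x
        ∂(mconv (mconv μp (μp.map Neg.neg) + mconv μn (μn.map Neg.neg)) γn
          + mconv (mconv μp (μn.map Neg.neg) + mconv μn (μp.map Neg.neg)) γp))
    = (∫ x, fconvTilde (smear μp μn f) (smear μp μn g) x ∂γp)
      - ∫ x, fconvTilde (smear μp μn f) (smear μp μn g) x ∂γn := by
  have hγp' : TBdd γp := hγp
  have hγn' : TBdd γn := hγn
  haveI : IsFiniteMeasureOnCompacts γp := hγp'.finiteOnCompacts
  haveI : IsFiniteMeasureOnCompacts γn := hγn'.finiteOnCompacts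
  haveI : IsFiniteMeasure (mconv μp (μp.map Neg.neg)) := by unfold mconv; infer_instance
  haveI : IsFiniteMeasure (mconv μp (μn.map Neg.neg)) := by unfold mconv; infer_instance
  haveI : IsFiniteMeasure (mconv μn (μp.map Neg.neg)) := by unfold mconv; infer_instance
  haveI : IsFiniteMeasure (mconv μn (μn.map Neg.neg)) := by unfold mconv; infer_instance
  have Kpp_p := key_lemma μp μp γp hγp' f g hfc hfs hgc hgs
  have Kpn_p := key_lemma μp μn γp hγp' f g hfc hfs hgc hgs
  have Knp_p := key_lemma μn μp γp hγp' f g hfc hfs hgc hgs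
  have Knn_p := key_lemma μn μn γp hγp' f g hfc hfs hgc hgs
  have Kpp_n := key_lemma μp μp γn hγn' f g hfc hfs hgc hgs
  have Kpn_n := key_lemma μp μn γn hγn' f g hfc hfs hgc hgs
  have Knp_n := key_lemma μn μp γn hγn' f g hfc hfs hgc hgs
  have Knn_n := key_lemma μn μn γn hγn' f g hfc hfs hgc hgs
  rw [mconv_add_left (mconv μp (μp.map Neg.neg)) (mconv μn (μn.map Neg.neg)) γp,
      mconv_add_left (mconv μp (μn.map Neg.neg)) (mconv μn (μp.map Neg.neg)) γn,
      mconv_add_left (mconv μp (μp.map Neg.neg)) (mconv μn (μn.map Neg.neg)) γn,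
      mconv_add_left (mconv μp (μn.map Neg.neg)) (mconv μn (μp.map Neg.neg)) γp]
  rw [integral_add_measure (Kpp_p.1.add_measure Knn_p.1) (Kpn_n.1.add_measure Knp_n.1),
      integral_add_measure Kpp_p.1 Knn_p.1, integral_add_measure Kpn_n.1 Knp_n.1,
      integral_add_measure (Kpp_n.1.add_measure Knn_n.1) (Kpn_p.1.add_measure Knp_p.1),
      integral_add_measure Kpp_n.1 Knn_n.1, integral_add_measure Kpn_p.1 Knp_p.1]
  rw [Kpp_p.2.2, Knn_p.2.2, Kpn_n.2.2, Knp_n.2.2, Kpp_n.2.2, Knn_n.2.2, Kpn_p.2.2, Knp_p.2.2]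
  have ptS : ∀ x : EuclideanSpace ℝ (Fin d), fconvTilde (smear μp μn f) (smear μp μn g) x
      = (fconvTilde (fun t => ∫ z, f (t + z) ∂μp) (fun u => ∫ w, g (u + w) ∂μp) x
          - fconvTilde (fun t => ∫ z, f (t + z) ∂μp) (fun u => ∫ w, g (u + w) ∂μn) x)
        - (fconvTilde (fun t => ∫ z, f (t + z) ∂μn) (fun u => ∫ w, g (u + w) ∂μp) x
          - fconvTilde (fun t => ∫ z, f (t + z) ∂μn) (fun u => ∫ w, g (u + w) ∂μn) x) := by
    intro x
    have e1 : ∀ t : EuclideanSpace ℝ (Fin d), smear μp μn f t * (starRingEnd ℂ) (smear μp μn g (t - x))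
        = (((∫ z, f (t + z) ∂μp) * (starRingEnd ℂ) (∫ w, g ((t - x) + w) ∂μp))
            - ((∫ z, f (t + z) ∂μp) * (starRingEnd ℂ) (∫ w, g ((t - x) + w) ∂μn)))
          - (((∫ z, f (t + z) ∂μn) * (starRingEnd ℂ) (∫ w, g ((t - x) + w) ∂μp))
            - ((∫ z, f (t + z) ∂μn) * (starRingEnd ℂ) (∫ w, g ((t - x) + w) ∂μn))) := by
      intro t
      show ((∫ z, f (t + z) ∂μp) - ∫ z, f (t + z) ∂μn)
          * (starRingEnd ℂ) ((∫ w, g ((t - x) + w) ∂μp) - ∫ w, g ((t - x) + w) ∂μn) = _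
      rw [map_sub]; ring
    have h1 : Integrable (fun t => ((∫ z, f (t + z) ∂μp) * (starRingEnd ℂ) (∫ w, g ((t - x) + w) ∂μp))
        - ((∫ z, f (t + z) ∂μp) * (starRingEnd ℂ) (∫ w, g ((t - x) + w) ∂μn)))
        (volume : Measure (EuclideanSpace ℝ (Fin d))) :=
      (intAB μp μp hfc hfs hgc hgs x).sub (intAB μp μn hfc hfs hgc hgs x)
    have h2 : Integrable (fun t => ((∫ z, f (t + z) ∂μn) * (starRingEnd ℂ) (∫ w, g ((t - x) + w) ∂μp))
        - ((∫ z, f (t + z) ∂μn) * (starRingEnd ℂ) (∫ w, g ((t - x) + w) ∂μn)))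
        (volume : Measure (EuclideanSpace ℝ (Fin d))) :=
      (intAB μn μp hfc hfs hgc hgs x).sub (intAB μn μn hfc hfs hgc hgs x)
    show ∫ t, smear μp μn f t * (starRingEnd ℂ) (smear μp μn g (t - x)) ∂volume = _
    rw [integral_congr_ae (ae_of_all _ e1),
        integral_sub h1 h2,
        integral_sub (intAB μp μp hfc hfs hgc hgs x) (intAB μp μn hfc hfs hgc hgs x),
        integral_sub (intAB μn μp hfc hfs hgc hgs x) (intAB μn μn hfc hfs hgc hgs x)]
    rfl
  have g1 : Integrable (fun x => fconvTilde (fun t => ∫ z, f (t + z) ∂μp) (fun u => ∫ w, g (u + w) ∂μp) x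
      - fconvTilde (fun t => ∫ z, f (t + z) ∂μp) (fun u => ∫ w, g (u + w) ∂μn) x) γp :=
    Kpp_p.2.1.sub Kpn_p.2.1
  have g2 : Integrable (fun x => fconvTilde (fun t => ∫ z, f (t + z) ∂μn) (fun u => ∫ w, g (u + w) ∂μp) x
      - fconvTilde (fun t => ∫ z, f (t + z) ∂μn) (fun u => ∫ w, g (u + w) ∂μn) x) γp :=
    Knp_p.2.1.sub Knn_p.2.1
  have g3 : Integrable (fun x => fconvTilde (fun t => ∫ z, f (t + z) ∂μp) (fun u => ∫ w, g (u + w) ∂μp) x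
      - fconvTilde (fun t => ∫ z, f (t + z) ∂μp) (fun u => ∫ w, g (u + w) ∂μn) x) γn :=
    Kpp_n.2.1.sub Kpn_n.2.1
  have g4 : Integrable (fun x => fconvTilde (fun t => ∫ z, f (t + z) ∂μn) (fun u => ∫ w, g (u + w) ∂μp) x
      - fconvTilde (fun t => ∫ z, f (t + z) ∂μn) (fun u => ∫ w, g (u + w) ∂μn) x) γn :=
    Knp_n.2.1.sub Knn_n.2.1
  rw [integral_congr_ae (ae_of_all _ ptS), integral_congr_ae (ae_of_all _ ptS)]
  rw [integral_sub g1 g2,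
      integral_sub Kpp_p.2.1 Kpn_p.2.1, integral_sub Knp_p.2.1 Knn_p.2.1,
      integral_sub g3 g4,
      integral_sub Kpp_n.2.1 Kpn_n.2.1, integral_sub Knp_n.2.1 Knn_n.2.1]
  ring
end

section
/- Let μ be a finite (possibly complex) measure on ℝ^d and f, g continuous with compact support. Then (μ * μ̃)(f * g̃) = ∫_{ℝ^d} f_μ(x) · conj(g_μ(x)) dx, where f_μ(x) = ∫ f(x+z) dμ(z). -/
open MeasureTheory Filter Topology
open scoped NNReal ENNReal

theorem derived_convolution_trick
    (d : ℕ) (μ : Measure (EuclideanSpace ℝ (Fin d))) [IsFiniteMeasure μ]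
    (f g : EuclideanSpace ℝ (Fin d) → ℂ)
    (hfc : Continuous f) (hfs : HasCompactSupport f)
    (hgc : Continuous g) (hgs : HasCompactSupport g) :
    -- `(μ * μ̃)(f * g̃) = ∫ f_μ(x) conj(g_μ(x)) dx`
    (∫ x, (∫ t, f t * (starRingEnd ℂ) (g (t - x)) ∂volume)
        ∂(mconv μ (μ.map Neg.neg)))
      = ∫ x, (∫ z, f (x + z) ∂μ) * (starRingEnd ℂ) (∫ z, g (x + z) ∂μ) ∂volume := by
  set k : EuclideanSpace ℝ (Fin d) → ℂ := fun y => (starRingEnd ℂ) (g (-y)) with hk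
  have hkc : Continuous k := continuous_star.comp (hgc.comp continuous_neg)
  have hks : HasCompactSupport k := by
    have h1 : HasCompactSupport fun y : EuclideanSpace ℝ (Fin d) => g (-y) :=
      hgs.comp_homeomorph (Homeomorph.neg _)
    exact h1.comp_left (g := (starRingEnd ℂ)) (by simp)
  set h : EuclideanSpace ℝ (Fin d) → ℂ :=
    fun x => ∫ t, f t * (starRingEnd ℂ) (g (t - x)) ∂volume with hhdef
  have hconv : h = MeasureTheory.convolution f k (ContinuousLinearMap.mul ℂ ℂ) volume := by
    funext x
    simp only [MeasureTheory.convolution, ContinuousLinearMap.mul_apply', hhdef, hk]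
    congr 1; funext t; congr 2; abel
  have hhc : Continuous h := by
    rw [hconv]
    exact hks.continuous_convolution_right _ hfc.locallyIntegrable hkc
  -- Step 1: unfold mconv and push through the two maps
  have step1 : (∫ x, h x ∂(mconv μ (μ.map Neg.neg)))
      = ∫ p, h (p.1 + -p.2) ∂(μ.prod μ) := by
    rw [mconv]
    rw [integral_map (by fun_prop) hhc.aestronglyMeasurable]
    have hprod : μ.prod (μ.map Neg.neg)
        = (μ.prod μ).map (Prod.map id Neg.neg) := by
      rw [← Measure.map_prod_map _ _ measurable_id measurable_neg, Measure.map_id]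
    rw [hprod]
    exact integral_map (measurable_id.prodMap measurable_neg).aemeasurable
      ((hhc.comp continuous_add).aestronglyMeasurable)
  -- pointwise: translate the inner integral
  have key : ∀ a b : EuclideanSpace ℝ (Fin d),
      h (a + -b) = ∫ x, f (x + a) * (starRingEnd ℂ) (g (x + b)) ∂volume := by
    intro a b
    rw [show h (a + -b)
      = ∫ t, f t * (starRingEnd ℂ) (g (t - (a + -b))) ∂volume from rfl]
    rw [← integral_add_right_eq_self
      (fun t => f t * (starRingEnd ℂ) (g (t - (a + -b)))) a]
    congr 1; funext x; congr 3; abel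
  -- big integrability
  obtain ⟨M, hM⟩ := hfs.exists_bound_of_continuous hfc
  have hΦm : AEStronglyMeasurable
      (fun q : (EuclideanSpace ℝ (Fin d) × EuclideanSpace ℝ (Fin d)) × EuclideanSpace ℝ (Fin d)
        => f (q.2 + q.1.1) * (starRingEnd ℂ) (g (q.2 + q.1.2)))
      ((μ.prod μ).prod volume) := by
    refine Continuous.aestronglyMeasurable ?_
    exact ((hfc.comp ((continuous_snd.add (continuous_fst.comp continuous_fst)))).mul
      (continuous_star.comp (hgc.comp
        (continuous_snd.add (continuous_snd.comp continuous_fst)))))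
  have sect : ∀ a b : EuclideanSpace ℝ (Fin d),
      Integrable (fun x => f (x + a) * (starRingEnd ℂ) (g (x + b))) volume := by
    intro a b
    apply Continuous.integrable_of_hasCompactSupport
      ((hfc.comp (continuous_id.add continuous_const)).mul
        (continuous_star.comp (hgc.comp (continuous_id.add continuous_const))))
    have h2 : HasCompactSupport fun x : EuclideanSpace ℝ (Fin d) => g (x + b) :=
      hgs.comp_homeomorph (Homeomorph.addRight b)
    have h2' : HasCompactSupport fun x : EuclideanSpace ℝ (Fin d) =>
        (starRingEnd ℂ) (g (x + b)) := h2.comp_left (by simp)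
    exact h2'.mul_left
  have gtrans : ∀ b : EuclideanSpace ℝ (Fin d),
      Integrable (fun x => ‖g (x + b)‖) volume := by
    intro b
    apply Continuous.integrable_of_hasCompactSupport
      ((hgc.comp (continuous_id.add continuous_const)).norm)
    exact (hgs.comp_homeomorph (Homeomorph.addRight b)).norm
  have htΦ : Integrable
      (fun q : (EuclideanSpace ℝ (Fin d) × EuclideanSpace ℝ (Fin d)) × EuclideanSpace ℝ (Fin d)
        => f (q.2 + q.1.1) * (starRingEnd ℂ) (g (q.2 + q.1.2)))
      ((μ.prod μ).prod volume) := by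
    rw [integrable_prod_iff hΦm]
    refine ⟨Eventually.of_forall fun p => sect p.1 p.2, ?_⟩
    refine Integrable.mono' (integrable_const (M * ∫ x, ‖g x‖ ∂volume))
      hΦm.norm.integral_prod_right' (Eventually.of_forall fun p => ?_)
    have hnn : 0 ≤ ∫ x, ‖f (x + p.1) * (starRingEnd ℂ) (g (x + p.2))‖ ∂volume :=
      integral_nonneg fun x => norm_nonneg _
    rw [Real.norm_of_nonneg hnn]
    calc ∫ x, ‖f (x + p.1) * (starRingEnd ℂ) (g (x + p.2))‖ ∂volume
        ≤ ∫ x, M * ‖g (x + p.2)‖ ∂volume := by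
          apply integral_mono_of_nonneg (Eventually.of_forall fun x => norm_nonneg _)
            ((gtrans p.2).const_mul M)
          refine Eventually.of_forall fun x => ?_
          show ‖f (x + p.1) * (starRingEnd ℂ) (g (x + p.2))‖ ≤ M * ‖g (x + p.2)‖
          rw [norm_mul, RCLike.norm_conj]
          exact mul_le_mul_of_nonneg_right (hM _) (norm_nonneg _)
      _ = M * ∫ x, ‖g (x + p.2)‖ ∂volume := integral_const_mul _ _
      _ = M * ∫ x, ‖g x‖ ∂volume := by
          rw [integral_add_right_eq_self (fun x => ‖g x‖) p.2]
  -- finish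
  calc (∫ x, h x ∂(mconv μ (μ.map Neg.neg)))
      = ∫ p, h (p.1 + -p.2) ∂(μ.prod μ) := step1
    _ = ∫ p : EuclideanSpace ℝ (Fin d) × EuclideanSpace ℝ (Fin d),
          ∫ x, f (x + p.1) * (starRingEnd ℂ) (g (x + p.2)) ∂volume ∂(μ.prod μ) := by
        congr 1; funext p; exact key p.1 p.2
    _ = ∫ x, ∫ p : EuclideanSpace ℝ (Fin d) × EuclideanSpace ℝ (Fin d),
          f (x + p.1) * (starRingEnd ℂ) (g (x + p.2)) ∂(μ.prod μ) ∂volume := by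
        exact integral_integral_swap htΦ
    _ = ∫ x, (∫ z, f (x + z) ∂μ) * (starRingEnd ℂ) (∫ z, g (x + z) ∂μ) ∂volume := by
        congr 1; funext x
        rw [integral_prod_mul (fun a => f (x + a)) (fun b => (starRingEnd ℂ) (g (x + b))),
          integral_conj]
end
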